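/- Every multi-demand market with strictly positive item valuations admits rough prices under which every legal item yields positive utility: there exists p ∈ ℝ^X with p_x > 0 for all x satisfying the three rough price conditions (for every player i: v_i(x) − p_x > v_i(y) − p_y whenever x ∈ R_i, y ∉ R_i; v_i(x) − p_x = v_i(y) − p_y whenever x, y ∈ K_i ∖ R_i; v_i(x) − p_x > v_i(y) − p_y whenever x ∈ K_i, y ∉ K_i) and such that, in addition, v_i(x) − p_x > 0 for every player i and every x ∈ K_i. -/

import Mathlib

open Finset

/-- The value of a bundle `S` for a player with demand `k` and item valuations `v`:
the maximum, over subsets `T ⊆ S` with `|T| ≤ k`, of the total value of `T`. -/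
noncomputable def bundleValue {X : Type*} [DecidableEq X] (k : ℕ) (v : X → ℝ)
    (S : Finset X) : ℝ :=
  ((S.powerset.filter (fun T => T.card ≤ k)).image (fun T => ∑ x ∈ T, v x)).max'
    (Finset.Nonempty.image ⟨∅, by simp⟩ _)

/-- An allocation: a partition of the items where player `i` gets exactly `k i` items. -/
def IsAllocation {X I : Type*} (k : I → ℕ) (O : I → Finset X) : Prop :=
  (∀ i, (O i).card = k i) ∧ (∀ x : X, ∃! i, x ∈ O i)

/-- Social welfare of an allocation. -/
noncomputable def socialWelfare {X I : Type*} [DecidableEq X] [Fintype I]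
    (v : I → X → ℝ) (k : I → ℕ) (O : I → Finset X) : ℝ :=
  ∑ i, bundleValue (k i) (v i) (O i)

/-- An optimal allocation: an allocation maximizing social welfare. -/
def IsOptimal {X I : Type*} [DecidableEq X] [Fintype I]
    (v : I → X → ℝ) (k : I → ℕ) (O : I → Finset X) : Prop :=
  IsAllocation k O ∧
    ∀ O' : I → Finset X, IsAllocation k O' → socialWelfare v k O' ≤ socialWelfare v k O


/-- An item `x` is legal to player `i`: some optimal allocation assigns `x` to `i`. -/
def LegalItem {X I : Type*} [DecidableEq X] [Fintype I]
    (v : I → X → ℝ) (k : I → ℕ) (i : I) (x : X) : Prop :=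
  ∃ O : I → Finset X, IsOptimal v k O ∧ x ∈ O i

/-- An item `x` belongs to `R_i`: it is assigned to `i` in every optimal allocation. -/
def AlwaysItem {X I : Type*} [DecidableEq X] [Fintype I]
    (v : I → X → ℝ) (k : I → ℕ) (i : I) (x : X) : Prop :=
  ∀ O : I → Finset X, IsOptimal v k O → x ∈ O i

set_option linter.unusedSectionVars false
set_option linter.unusedVariables false

section Aux
attribute [local instance] Classical.propDecidable

variable {X I : Type*} [Fintype X] [DecidableEq X] [Fintype I] [DecidableEq I]

lemma bundleValue_eq_sum {k : ℕ} {v : X → ℝ} {S : Finset X}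
    (hc : S.card ≤ k) (hv : ∀ x, 0 ≤ v x) : bundleValue k v S = ∑ x ∈ S, v x := by
  apply le_antisymm
  · apply Finset.max'_le
    intro b hb
    simp only [Finset.mem_image, Finset.mem_filter, Finset.mem_powerset] at hb
    obtain ⟨T, ⟨hT, _⟩, rfl⟩ := hb
    exact Finset.sum_le_sum_of_subset_of_nonneg hT (fun x _ _ => hv x)
  · apply Finset.le_max'
    exact Finset.mem_image.2 ⟨S, by simp [hc], rfl⟩

noncomputable def ownerOf (O : I → Finset X) (h : ∀ x : X, ∃! i, x ∈ O i) (x : X) : I :=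
  (h x).choose

lemma ownerOf_spec {O : I → Finset X} (h : ∀ x : X, ∃! i, x ∈ O i) (x : X) :
    x ∈ O (ownerOf O h x) := (h x).choose_spec.1

lemma mem_iff_ownerOf {O : I → Finset X} (h : ∀ x : X, ∃! i, x ∈ O i) (x : X) (i : I) :
    x ∈ O i ↔ ownerOf O h x = i := by
  constructor
  · intro hx
    exact ((h x).choose_spec.2 i hx).symm
  · intro he
    rw [← he]
    exact ownerOf_spec h x

lemma socialWelfare_eq_sum {v : I → X → ℝ} {k : I → ℕ} {O : I → Finset X}
    (hv : ∀ i x, 0 ≤ v i x) (hO : IsAllocation k O) (b : X → I)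
    (hb : ∀ x i, x ∈ O i ↔ b x = i) :
    socialWelfare v k O = ∑ x, v (b x) x := by
  have hfi : ∀ i, O i = univ.filter (fun x => b x = i) := by
    intro i; ext x; simp [hb x i]
  unfold socialWelfare
  rw [← Finset.sum_fiberwise univ b (fun x => v (b x) x)]
  refine Finset.sum_congr rfl fun i _ => ?_
  rw [bundleValue_eq_sum (le_of_eq (hO.1 i)) (fun x => hv i x), hfi i]
  refine Finset.sum_congr rfl fun x hx => ?_
  rw [(Finset.mem_filter.1 hx).2]

lemma exists_optimal {v : I → X → ℝ} {k : I → ℕ}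
    (hex : ∃ O : I → Finset X, IsAllocation k O) :
    ∃ O : I → Finset X, IsOptimal v k O := by
  obtain ⟨O0, h0⟩ := hex
  have hne : (univ.filter fun O : I → Finset X => IsAllocation k O).Nonempty :=
    ⟨O0, by simp [h0]⟩
  obtain ⟨O, hO, hmax⟩ := Finset.exists_max_image _ (socialWelfare v k) hne
  exact ⟨O, (Finset.mem_filter.1 hO).2, fun O' h' => hmax O' (by simp [h'])⟩







/-- weight of a permutation wrt valuations and owner map -/
noncomputable def wtp (v : I → X → ℝ) (a : X → I) (π : Equiv.Perm X) : ℝ :=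
  ∑ z, (v (a z) (π z) - v (a z) z)

lemma wtp_one (v : I → X → ℝ) (a : X → I) : wtp v a 1 = 0 := by
  simp [wtp]

/-- legal edges -/
def legE (v : I → X → ℝ) (a : X → I) (y x : X) : Prop :=
  ∃ π : Equiv.Perm X, wtp v a π = 0 ∧ π y = x

lemma legE_refl (v : I → X → ℝ) (a : X → I) (y : X) : legE v a y y :=
  ⟨1, wtp_one v a, rfl⟩

/-- the rotated allocation -/
def Operm (Ost : I → Finset X) (π : Equiv.Perm X) (i : I) : Finset X :=
  (Ost i).image π

lemma Operm_alloc {k : I → ℕ} {Ost : I → Finset X} (h : IsAllocation k Ost)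
    (π : Equiv.Perm X) : IsAllocation k (Operm Ost π) := by
  constructor
  · intro i
    rw [Operm, Finset.card_image_of_injective _ π.injective]
    exact h.1 i
  · intro x
    obtain ⟨i, hi, hu⟩ := h.2 (π.symm x)
    refine ⟨i, ?_, ?_⟩
    · exact Finset.mem_image.2 ⟨π.symm x, hi, by simp⟩
    · intro j hj
      obtain ⟨y, hy, hyx⟩ := Finset.mem_image.1 hj
      have : y = π.symm x := by
        rw [← hyx]; simp
      exact hu j (this ▸ hy)

lemma mem_Operm {Ost : I → Finset X} {π : Equiv.Perm X} {x : X} {i : I}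
    (a : X → I) (ha : ∀ x i, x ∈ Ost i ↔ a x = i) :
    x ∈ Operm Ost π i ↔ a (π.symm x) = i := by
  constructor
  · intro hx
    obtain ⟨y, hy, rfl⟩ := Finset.mem_image.1 hx
    simpa using (ha y i).1 hy
  · intro hi
    exact Finset.mem_image.2 ⟨π.symm x, (ha _ i).2 hi, by simp⟩

lemma sw_Operm {v : I → X → ℝ} {k : I → ℕ} {Ost : I → Finset X}
    (hv : ∀ i x, 0 ≤ v i x) (hOst : IsAllocation k Ost)
    (a : X → I) (ha : ∀ x i, x ∈ Ost i ↔ a x = i) (π : Equiv.Perm X) :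
    socialWelfare v k (Operm Ost π) = socialWelfare v k Ost + wtp v a π := by
  rw [socialWelfare_eq_sum hv (Operm_alloc hOst π) (fun x => a (π.symm x))
      (fun x i => mem_Operm a ha),
    socialWelfare_eq_sum hv hOst a ha]
  have : (∑ x, v (a (π.symm x)) x) = ∑ y, v (a y) (π y) := by
    rw [← Equiv.sum_comp π (fun x => v (a (π.symm x)) x)]
    simp
  rw [this, wtp]
  rw [Finset.sum_sub_distrib]
  ring

lemma wtp_nonpos {v : I → X → ℝ} {k : I → ℕ} {Ost : I → Finset X}
    (hv : ∀ i x, 0 ≤ v i x) (hopt : IsOptimal v k Ost)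
    (a : X → I) (ha : ∀ x i, x ∈ Ost i ↔ a x = i) (π : Equiv.Perm X) :
    wtp v a π ≤ 0 := by
  have h := hopt.2 (Operm Ost π) (Operm_alloc hopt.1 π)
  rw [sw_Operm hv hopt.1 a ha π] at h
  linarith

lemma exists_perm_of_alloc {v : I → X → ℝ} {k : I → ℕ} {Ost O : I → Finset X}
    (hv : ∀ i x, 0 ≤ v i x) (hOst : IsAllocation k Ost) (hO : IsAllocation k O)
    (a : X → I) (ha : ∀ x i, x ∈ Ost i ↔ a x = i) :
    ∃ π : Equiv.Perm X, (∀ y, π y ∈ O (a y)) ∧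
      socialWelfare v k O = socialWelfare v k Ost + wtp v a π := by
  set b := ownerOf O hO.2 with hbdef
  have hb : ∀ x i, x ∈ O i ↔ b x = i := fun x i => mem_iff_ownerOf hO.2 x i
  have hcard : ∀ i, Fintype.card {x // a x = i} = Fintype.card {x // b x = i} := by
    intro i
    have h1 : Fintype.card {x // a x = i} = (Ost i).card := by
      rw [← Fintype.card_coe]
      exact Fintype.card_congr (Equiv.subtypeEquivRight (fun x => ((ha x i).symm)))
    have h2 : Fintype.card {x // b x = i} = (O i).card := by
      rw [← Fintype.card_coe]
      exact Fintype.card_congr (Equiv.subtypeEquivRight (fun x => ((hb x i).symm)))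
    rw [h1, h2, hOst.1 i, hO.1 i]
  set mid : ∀ i, {x // a x = i} ≃ {x // b x = i} := fun i => Fintype.equivOfCardEq (hcard i)
  set π : Equiv.Perm X :=
    ((Equiv.sigmaFiberEquiv a).symm.trans (Equiv.sigmaCongrRight mid)).trans
      (Equiv.sigmaFiberEquiv b)
  have hπ : ∀ y, b (π y) = a y := by
    intro y
    show b ((Equiv.sigmaFiberEquiv b) ((Equiv.sigmaCongrRight mid) ((Equiv.sigmaFiberEquiv a).symm y))) = a y
    set s := (Equiv.sigmaFiberEquiv a).symm y with hs
    have h1 : s.1 = a y := by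
      have := congrArg a ((Equiv.sigmaFiberEquiv a).apply_symm_apply y)
      rw [← hs] at *
      have h2 : (Equiv.sigmaFiberEquiv a) s = s.2.val := rfl
      rw [h2] at this
      rw [← this, s.2.property]
    have h3 : (Equiv.sigmaCongrRight mid) s = ⟨s.1, mid s.1 s.2⟩ := rfl
    rw [h3]
    have h4 : (Equiv.sigmaFiberEquiv b) (⟨s.1, mid s.1 s.2⟩ : Σ i, {x // b x = i}) = (mid s.1 s.2).val := rfl
    rw [h4, (mid s.1 s.2).property, h1]
  refine ⟨π, fun y => (hb (π y) (a y)).2 (hπ y), ?_⟩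
  rw [socialWelfare_eq_sum hv hO b hb, socialWelfare_eq_sum hv hOst a ha]
  have : (∑ x, v (b x) x) = ∑ y, v (b (π y)) (π y) := (Equiv.sum_comp π (fun x => v (b x) x)).symm
  rw [this]
  have : (∑ y, v (b (π y)) (π y)) = ∑ y, v (a y) (π y) := by
    refine Finset.sum_congr rfl fun y _ => by rw [hπ y]
  rw [this, wtp, Finset.sum_sub_distrib]
  ring

lemma legal_iff {v : I → X → ℝ} {k : I → ℕ} {Ost : I → Finset X}
    (hv : ∀ i x, 0 ≤ v i x) (hopt : IsOptimal v k Ost)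
    (a : X → I) (ha : ∀ x i, x ∈ Ost i ↔ a x = i) (i : I) (x : X) :
    LegalItem v k i x ↔ ∃ y, y ∈ Ost i ∧ legE v a y x := by
  constructor
  · rintro ⟨O, hO, hx⟩
    obtain ⟨π, hmem, hsw⟩ := exists_perm_of_alloc hv hopt.1 hO.1 a ha
    have heq : socialWelfare v k O = socialWelfare v k Ost :=
      le_antisymm (hopt.2 O hO.1) (hO.2 Ost hopt.1)
    have hwt : wtp v a π = 0 := by rw [heq] at hsw; linarith
    refine ⟨π.symm x, ?_, ⟨π, hwt, by simp⟩⟩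
    have h1 : π (π.symm x) ∈ O (a (π.symm x)) := hmem (π.symm x)
    rw [π.apply_symm_apply] at h1
    obtain ⟨j, _, hu⟩ := hO.1.2 x
    have := (hu _ h1).trans (hu i hx).symm
    rw [(ha (π.symm x) i)]
    exact this
  · rintro ⟨y, hy, π, hwt, hπ⟩
    refine ⟨Operm Ost π, ⟨⟨Operm_alloc hopt.1 π, ?_⟩, ?_⟩⟩
    · intro O' hO'
      rw [sw_Operm hv hopt.1 a ha π, hwt]
      simpa using hopt.2 O' hO'
    · rw [← hπ]
      exact Finset.mem_image.2 ⟨y, hy, rfl⟩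



noncomputable def ccost (v : I → X → ℝ) (a : X → I) (y x : X) : ℝ := v (a y) x - v (a y) y

noncomputable def cE (v : I → X → ℝ) (a : X → I) (ε : ℝ) (y x : X) : ℝ :=
  ccost v a y x + (if legE v a y x then 0 else ε)

lemma cE_self (v : I → X → ℝ) (a : X → I) (ε : ℝ) (z : X) : cE v a ε z z = 0 := by
  simp [cE, ccost, legE_refl]

lemma ccost_le_cE (v : I → X → ℝ) (a : X → I) {ε : ℝ} (hε : 0 ≤ ε) (y x : X) :
    ccost v a y x ≤ cE v a ε y x := by
  unfold cE; split <;> simp [hε]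

lemma cE_of_legE (v : I → X → ℝ) (a : X → I) (ε : ℝ) {y x : X} (h : legE v a y x) :
    cE v a ε y x = ccost v a y x := by
  simp [cE, h]

lemma exists_eps {v : I → X → ℝ} {k : I → ℕ} {Ost : I → Finset X}
    (hv : ∀ i x, 0 ≤ v i x) (hopt : IsOptimal v k Ost)
    (a : X → I) (ha : ∀ x i, x ∈ Ost i ↔ a x = i) :
    ∃ ε : ℝ, 0 < ε ∧ ∀ π : Equiv.Perm X, (∃ z, ¬ legE v a z (π z)) →
      wtp v a π + (Fintype.card X) * ε ≤ 0 := by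
  set S := univ.filter (fun π : Equiv.Perm X => ∃ z, ¬ legE v a z (π z)) with hS
  by_cases hne : S.Nonempty
  · set γ := S.inf' hne (fun π => -wtp v a π) with hγ
    have hγpos : 0 < γ := by
      rw [hγ, Finset.lt_inf'_iff]
      intro π hπ
      have h1 : wtp v a π ≤ 0 := wtp_nonpos hv hopt a ha π
      have h2 : wtp v a π ≠ 0 := by
        intro h0
        obtain ⟨z, hz⟩ := (Finset.mem_filter.1 hπ).2
        exact hz ⟨π, h0, rfl⟩
      have : wtp v a π < 0 := lt_of_le_of_ne h1 h2
      linarith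
    refine ⟨γ / (Fintype.card X + 1), by positivity, ?_⟩
    intro π hπ
    have hmem : π ∈ S := Finset.mem_filter.2 ⟨Finset.mem_univ _, hπ⟩
    have h1 : -wtp v a π ≥ γ := Finset.inf'_le _ hmem
    have h2 : (Fintype.card X : ℝ) * (γ / (Fintype.card X + 1)) ≤ γ := by
      rw [mul_div_assoc']
      rw [div_le_iff₀ (by positivity)]
      nlinarith [hγpos]
    linarith
  · refine ⟨1, one_pos, fun π hπ => ?_⟩
    exfalso
    refine hne ⟨π, ?_⟩
    rw [hS]
    exact Finset.mem_filter.2 ⟨Finset.mem_univ _, hπ⟩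

lemma cE_perm_sum_nonpos {v : I → X → ℝ} {k : I → ℕ} {Ost : I → Finset X}
    (hv : ∀ i x, 0 ≤ v i x) (hopt : IsOptimal v k Ost)
    (a : X → I) (ha : ∀ x i, x ∈ Ost i ↔ a x = i) {ε : ℝ} (hε : 0 < ε)
    (hb : ∀ π : Equiv.Perm X, (∃ z, ¬ legE v a z (π z)) →
      wtp v a π + (Fintype.card X) * ε ≤ 0)
    (π : Equiv.Perm X) : ∑ z, cE v a ε z (π z) ≤ 0 := by
  have hsplit : ∑ z, cE v a ε z (π z) =
      wtp v a π + ∑ z, (if legE v a z (π z) then (0:ℝ) else ε) := by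
    rw [wtp, ← Finset.sum_add_distrib]
    rfl
  rw [hsplit]
  by_cases hall : ∀ z, legE v a z (π z)
  · have : ∑ z, (if legE v a z (π z) then (0:ℝ) else ε) = 0 := by
      apply Finset.sum_eq_zero; intro z _; simp [hall z]
    rw [this]
    simpa using wtp_nonpos hv hopt a ha π
  · push_neg at hall
    have h2 : ∑ z, (if legE v a z (π z) then (0:ℝ) else ε) ≤ (Fintype.card X) * ε := by
      calc ∑ z, (if legE v a z (π z) then (0:ℝ) else ε) ≤ ∑ _z : X, ε := by
            apply Finset.sum_le_sum; intro z _; split <;> linarith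
        _ = (Fintype.card X) * ε := by
            rw [Finset.sum_const, nsmul_eq_mul]; simp
    linarith [hb π hall]

/-- weight of a walk -/
noncomputable def wq (c : X → X → ℝ) (g : ℕ → X) (r : ℕ) : ℝ :=
  ∑ t ∈ Finset.range r, c (g t) (g (t+1))

lemma walk_extend (c : X → X → ℝ) (g : ℕ → X) (r : ℕ) (x : X) :
    wq c (fun t => if t ≤ r then g t else x) (r+1) = wq c g r + c (g r) x := by
  rw [wq, Finset.sum_range_succ, wq]
  congr 1
  · refine Finset.sum_congr rfl fun t ht => ?_
    have := Finset.mem_range.1 ht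
    rw [if_pos (by omega : t ≤ r), if_pos (by omega : t + 1 ≤ r)]
  · rw [if_pos (le_refl r), if_neg (by omega : ¬ r + 1 ≤ r)]

lemma walk_excise (c : X → X → ℝ) (g : ℕ → X) {i j r : ℕ} (hij : i < j) (hjr : j ≤ r)
    (hgij : g i = g j) :
    wq c g r = wq c (fun t => if t ≤ i then g t else g (t + (j - i))) (r - (j - i))
      + wq c (fun t => g (i + t)) (j - i) := by
  set g' : ℕ → X := fun t => if t ≤ i then g t else g (t + (j - i)) with hg'
  have hshift : ∀ t, g' (i + t) = g (j + t) := by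
    intro t
    rcases Nat.eq_zero_or_pos t with rfl | ht
    · simp only [hg', Nat.add_zero, if_pos (le_refl i)]
      rw [hgij]
    · simp only [hg']
      rw [if_neg (by omega : ¬ i + t ≤ i)]
      congr 1
      omega
  set F : ℕ → ℝ := fun t => c (g t) (g (t+1)) with hF
  set G : ℕ → ℝ := fun t => c (g' t) (g' (t+1)) with hG
  have split : ∑ t ∈ Finset.Ico 0 r, F t = (∑ t ∈ Finset.Ico 0 i, F t)
      + (∑ t ∈ Finset.range (j - i), F (i + t)) + (∑ t ∈ Finset.range (r - j), F (j + t)) := by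
    rw [← Finset.sum_Ico_consecutive F (Nat.zero_le j) hjr,
      ← Finset.sum_Ico_consecutive F (Nat.zero_le i) hij.le,
      Finset.sum_Ico_eq_sum_range (f := F) (m := i) (n := j),
      Finset.sum_Ico_eq_sum_range (f := F) (m := j) (n := r)]
  have splitG : ∑ t ∈ Finset.Ico 0 (r - (j - i)), G t = (∑ t ∈ Finset.Ico 0 i, G t)
      + (∑ t ∈ Finset.range (r - (j - i) - i), G (i + t)) := by
    rw [← Finset.sum_Ico_consecutive G (Nat.zero_le i) (by omega : i ≤ r - (j - i)),
      Finset.sum_Ico_eq_sum_range (f := G) (m := i) (n := r - (j - i))]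
  have cA : ∑ t ∈ Finset.Ico 0 i, G t = ∑ t ∈ Finset.Ico 0 i, F t := by
    refine Finset.sum_congr rfl fun t ht => ?_
    have ht' : t < i := (Finset.mem_Ico.1 ht).2
    show c (g' t) (g' (t + 1)) = c (g t) (g (t + 1))
    simp only [hg']
    rw [if_pos (by omega : t ≤ i), if_pos (by omega : t + 1 ≤ i)]
  have cB : ∑ t ∈ Finset.range (r - (j - i) - i), G (i + t)
      = ∑ t ∈ Finset.range (r - j), F (j + t) := by
    have : r - (j - i) - i = r - j := by omega
    rw [this]
    refine Finset.sum_congr rfl fun t ht => ?_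
    show c (g' (i + t)) (g' (i + t + 1)) = c (g (j + t)) (g (j + t + 1))
    rw [hshift t]
    have h2 : i + t + 1 = i + (t + 1) := by ring
    rw [h2, hshift (t+1)]
    have h3 : j + (t + 1) = j + t + 1 := by ring
    rw [h3]
  have e1 : wq c g r = ∑ t ∈ Finset.Ico 0 r, F t := by
    rw [wq, Finset.range_eq_Ico]
  have e2 : wq c g' (r - (j - i)) = ∑ t ∈ Finset.Ico 0 (r - (j - i)), G t := by
    rw [wq, Finset.range_eq_Ico]
  have e3 : wq c (fun t => g (i + t)) (j - i) = ∑ t ∈ Finset.range (j - i), F (i + t) := by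
    rw [wq]
    refine Finset.sum_congr rfl fun t ht => ?_
    show c (g (i + t)) (g (i + (t + 1))) = c (g (i + t)) (g (i + t + 1))
    have h2 : i + (t + 1) = i + t + 1 := by ring
    rw [h2]
  rw [e1, e2, e3, split, splitG, cA, cB]
  ring


lemma perm_sum_of_cycle_list {c : X → X → ℝ} (hdiag : ∀ z, c z z = 0)
    {g : ℕ → X} {r : ℕ} (hr : 0 < r) (hg : g r = g 0)
    (hinj : ∀ s t, s < t → t < r → g s ≠ g t) :
    ∑ z, c z ((List.map g (List.range r)).formPerm z) = wq c g r := by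
  set L := List.map g (List.range r) with hL
  have hlen : L.length = r := by simp [hL]
  have hnd : L.Nodup := by
    refine List.Nodup.map_on ?_ List.nodup_range
    intro s hs t ht heq
    rw [List.mem_range] at hs ht
    by_contra hne
    rcases lt_or_gt_of_ne hne with h | h
    · exact hinj s t h ht heq
    · exact hinj t s h hs heq.symm
  have hgetL : ∀ t (ht : t < r), L[t]'(by omega) = g t := by
    intro t ht
    simp [hL]
  have hkey : ∀ t, t < r → L.formPerm (g t) = g (t + 1) := by
    intro t ht
    rw [← hgetL t ht]
    rw [List.formPerm_apply_getElem L hnd t (by omega)]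
    rcases Nat.lt_or_ge (t+1) r with h | h
    · have hmod : (t + 1) % L.length = t + 1 := by
        rw [hlen]; exact Nat.mod_eq_of_lt h
      simp only [hmod]
      exact hgetL (t+1) h
    · have htr : t + 1 = r := by omega
      have hmod : (t + 1) % L.length = 0 := by
        rw [hlen, htr, Nat.mod_self]
      simp only [hmod]
      rw [hgetL 0 hr, ← hg, htr]
  set Lf := (Finset.range r).image g with hLf
  have hmemL : ∀ z, z ∈ Lf ↔ z ∈ L := by
    intro z
    simp [hLf, hL, List.mem_map]
  have h1 : ∑ z, c z (L.formPerm z) = ∑ z ∈ Lf, c z (L.formPerm z) := by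
    refine (Finset.sum_subset (Finset.subset_univ Lf) ?_).symm
    intro z _ hz
    rw [List.formPerm_apply_of_notMem (l := L) (x := z) (fun hmem => hz ((hmemL z).2 hmem))]
    exact hdiag z
  have h2 : ∑ z ∈ Lf, c z (L.formPerm z) = ∑ t ∈ Finset.range r, c (g t) (L.formPerm (g t)) := by
    rw [hLf]
    refine Finset.sum_image ?_
    intro s hs t ht heq
    by_contra hne
    rcases lt_or_gt_of_ne hne with h | h
    · exact hinj s t h (Finset.mem_range.1 ht) heq
    · exact hinj t s h (Finset.mem_range.1 hs) heq.symm
  rw [h1, h2, wq]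
  refine Finset.sum_congr rfl fun t ht => ?_
  rw [hkey t (Finset.mem_range.1 ht)]

lemma closed_walk_nonpos {c : X → X → ℝ} (hdiag : ∀ z, c z z = 0)
    (hperm : ∀ π : Equiv.Perm X, ∑ z, c z (π z) ≤ 0) :
    ∀ r, ∀ g : ℕ → X, g r = g 0 → wq c g r ≤ 0 := by
  intro r
  induction r using Nat.strong_induction_on with
  | _ r ih =>
    intro g hg
    rcases Nat.eq_zero_or_pos r with rfl | hr
    · simp [wq]
    by_cases hrep : ∃ p : ℕ × ℕ, p.1 < p.2 ∧ p.2 ≤ r ∧ p ≠ (0, r) ∧ g p.1 = g p.2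
    · obtain ⟨⟨i, j⟩, hij, hjr, hne, hgij⟩ := hrep
      have hne' : ¬ (i = 0 ∧ j = r) := by
        intro ⟨h1, h2⟩
        exact hne (by rw [h1, h2])
      rw [walk_excise c g hij hjr hgij]
      have hinner : wq c (fun t => g (i + t)) (j - i) ≤ 0 := by
        refine ih (j - i) (by omega) _ ?_
        show g (i + (j - i)) = g (i + 0)
        rw [Nat.add_zero, (by omega : i + (j - i) = j), hgij]
      have houter : wq c (fun t => if t ≤ i then g t else g (t + (j - i))) (r - (j - i)) ≤ 0 := by
        refine ih (r - (j - i)) (by omega) _ ?_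
        show (if r - (j - i) ≤ i then g (r - (j - i)) else g (r - (j - i) + (j - i)))
          = (if 0 ≤ i then g 0 else g (0 + (j - i)))
        rw [if_pos (Nat.zero_le i)]
        rcases Nat.lt_or_ge (r - (j - i)) (i + 1) with h | h
        · have hri : r - (j - i) = i := by omega
          have hrj : r = j := by omega
          rw [if_pos (by omega : r - (j - i) ≤ i), hri, hgij, ← hrj, hg]
        · rw [if_neg (by omega : ¬ r - (j - i) ≤ i), (by omega : r - (j - i) + (j - i) = r), hg]
      linarith
    · push_neg at hrep
      have hinj : ∀ s t, s < t → t < r → g s ≠ g t := by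
        intro s t hst htr
        exact hrep (s, t) hst (by omega) (by
          intro h
          have : t = r := congrArg Prod.snd h
          omega)
      rw [← perm_sum_of_cycle_list hdiag hr hg hinj]
      exact hperm _


def extFn (n : ℕ) (f : Fin (n+1) → X) : ℕ → X :=
  fun j => f ⟨min j n, Nat.lt_succ_of_le (Nat.min_le_right _ _)⟩

lemma extFn_eq {n : ℕ} (f : Fin (n+1) → X) {j : ℕ} (hj : j ≤ n) : extFn n f j = f ⟨j, by omega⟩ := by
  unfold extFn
  congr 1
  exact Fin.ext (Nat.min_eq_left hj)

noncomputable def qmax (c : X → X → ℝ) (hX : Nonempty X) (x : X) : ℝ :=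
  haveI := hX
  Finset.sup' Finset.univ Finset.univ_nonempty
    (fun p : (Fin (Fintype.card X + 1) → X) × Fin (Fintype.card X + 1) =>
      if extFn (Fintype.card X) p.1 p.2.val = x
      then wq c (extFn (Fintype.card X) p.1) p.2.val else 0)

lemma wq_le_qmax (c : X → X → ℝ) (hX : Nonempty X) (g : ℕ → X) (r : ℕ)
    (hr : r ≤ Fintype.card X) {x : X} (hgr : g r = x) :
    wq c g r ≤ qmax c hX x := by
  haveI := hX
  set n := Fintype.card X with hn
  set f : Fin (n+1) → X := fun t => g t.val with hf
  have hext : ∀ j, j ≤ n → extFn n f j = g j := by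
    intro j hj
    rw [extFn_eq f hj]
  have hwq : wq c (extFn n f) r = wq c g r := by
    rw [wq, wq]
    refine Finset.sum_congr rfl fun t ht => ?_
    have htr := Finset.mem_range.1 ht
    rw [hext t (by omega), hext (t+1) (by omega)]
  have hcond : extFn n f (⟨r, by omega⟩ : Fin (n+1)).val = x := by
    show extFn n f r = x
    rw [hext r hr, hgr]
  have hle := Finset.le_sup' (α := ℝ)
    (fun p : (Fin (n + 1) → X) × Fin (n + 1) =>
      if extFn n p.1 p.2.val = x then wq c (extFn n p.1) p.2.val else 0)
    (b := (f, ⟨r, by omega⟩)) (Finset.mem_univ _)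
  rw [if_pos hcond, hwq] at hle
  exact hle

lemma qmax_nonneg (c : X → X → ℝ) (hX : Nonempty X) (x : X) : 0 ≤ qmax c hX x := by
  have := wq_le_qmax c hX (fun _ => x) 0 (Nat.zero_le _) rfl
  simpa [wq] using this

lemma qmax_le {c : X → X → ℝ} (hdiag : ∀ z, c z z = 0)
    (hperm : ∀ π : Equiv.Perm X, ∑ z, c z (π z) ≤ 0) (hX : Nonempty X) (x : X)
    {B : ℝ} (hB : 0 ≤ B) (hcb : ∀ z, - c x z ≤ B) : qmax c hX x ≤ B := by
  haveI := hX
  rw [qmax]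
  set n := Fintype.card X with hn
  refine Finset.sup'_le _ _ ?_
  intro p _
  by_cases hcond : extFn n p.1 p.2.val = x
  case neg =>
    rw [if_neg hcond]; exact hB
  case pos =>
    rw [if_pos hcond]
    set g := extFn n p.1 with hg
    set r := p.2.val with hrdef
    have hclosed : wq c (fun t => if t ≤ r then g t else g 0) (r + 1) ≤ 0 := by
      refine closed_walk_nonpos hdiag hperm (r+1) _ ?_
      show (if r + 1 ≤ r then g (r+1) else g 0) = (if 0 ≤ r then g 0 else g 0)
      rw [if_neg (by omega : ¬ r + 1 ≤ r), if_pos (Nat.zero_le r)]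
    rw [walk_extend c g r (g 0)] at hclosed
    have : wq c g r ≤ - c (g r) (g 0) := by linarith
    calc wq c g r ≤ - c (g r) (g 0) := this
      _ = - c x (g 0) := by rw [hcond]
      _ ≤ B := hcb (g 0)

lemma excise_endpoint (g : ℕ → X) {i j r : ℕ} (hij : i < j) (hjr : j ≤ r) (hgij : g i = g j) :
    (fun t => if t ≤ i then g t else g (t + (j - i))) (r - (j - i)) = g r := by
  rcases Nat.lt_or_ge (r - (j - i)) (i + 1) with h | h
  · have hri : r - (j - i) = i := by omega
    have hrj : r = j := by omega
    show (if r - (j - i) ≤ i then g (r - (j - i)) else g (r - (j - i) + (j - i))) = g r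
    rw [if_pos (by omega : r - (j - i) ≤ i), hri, hgij, ← hrj]
  · show (if r - (j - i) ≤ i then g (r - (j - i)) else g (r - (j - i) + (j - i))) = g r
    rw [if_neg (by omega : ¬ r - (j - i) ≤ i), (by omega : r - (j - i) + (j - i) = r)]

lemma qmax_bellman {c : X → X → ℝ} (hdiag : ∀ z, c z z = 0)
    (hperm : ∀ π : Equiv.Perm X, ∑ z, c z (π z) ≤ 0) (hX : Nonempty X) (y x : X) :
    qmax c hX y + c y x ≤ qmax c hX x := by
  haveI := hX
  set n := Fintype.card X with hn
  have hnpos : 0 < n := Fintype.card_pos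
  obtain ⟨p, _, hp⟩ := Finset.exists_mem_eq_sup' (Finset.univ_nonempty)
    (fun p : (Fin (n + 1) → X) × Fin (n + 1) =>
      if extFn n p.1 p.2.val = y then wq c (extFn n p.1) p.2.val else 0)
  have hwalk : ∃ g : ℕ → X, ∃ r : ℕ, r ≤ n ∧ g r = y ∧ qmax c hX y ≤ wq c g r := by
    by_cases hcond : extFn n p.1 p.2.val = y
    · refine ⟨extFn n p.1, p.2.val, by omega, hcond, ?_⟩
      rw [qmax, hp, if_pos hcond]
    · refine ⟨fun _ => y, 0, Nat.zero_le _, rfl, ?_⟩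
      rw [qmax, hp, if_neg hcond]
      simp [wq]
  obtain ⟨g, r, hr, hgr, hge⟩ := hwalk
  have hshort : ∃ g' : ℕ → X, ∃ r' : ℕ, r' < n ∧ g' r' = y ∧ wq c g r ≤ wq c g' r' := by
    rcases Nat.lt_or_ge r n with h | h
    · exact ⟨g, r, h, hgr, le_refl _⟩
    · have hrn : r = n := le_antisymm hr h
      obtain ⟨t1, t2, hne, heq⟩ := Fintype.exists_ne_map_eq_of_card_lt
        (fun t : Fin (n+1) => g t.val) (by simp [hn])
      have hne' : t1.val ≠ t2.val := fun hh => hne (Fin.ext hh)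
      obtain ⟨i, j, hij, hjn, hgij⟩ : ∃ i j : ℕ, i < j ∧ j ≤ n ∧ g i = g j := by
        rcases lt_or_gt_of_ne hne' with h' | h'
        · exact ⟨t1.val, t2.val, h', by omega, heq⟩
        · exact ⟨t2.val, t1.val, h', by omega, heq.symm⟩
      have hjr : j ≤ r := by omega
      have hexc := walk_excise c g hij hjr hgij
      have hinner : wq c (fun t => g (i + t)) (j - i) ≤ 0 := by
        refine closed_walk_nonpos hdiag hperm (j - i) _ ?_
        show g (i + (j - i)) = g (i + 0)
        rw [Nat.add_zero, (by omega : i + (j - i) = j), hgij]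
      refine ⟨fun t => if t ≤ i then g t else g (t + (j - i)), r - (j - i), by omega, ?_, by linarith⟩
      rw [excise_endpoint g hij hjr hgij, hgr]
  obtain ⟨g', r', hr', hg'y, hle⟩ := hshort
  have hext := walk_extend c g' r' x
  have hfin : wq c (fun t => if t ≤ r' then g' t else x) (r' + 1) ≤ qmax c hX x := by
    refine wq_le_qmax c hX _ (r' + 1) (by omega) ?_
    show (if r' + 1 ≤ r' then g' (r' + 1) else x) = x
    rw [if_neg (by omega : ¬ r' + 1 ≤ r')]
  rw [hext, hg'y] at hfin
  linarith


lemma qmax_rev {v : I → X → ℝ} {k : I → ℕ} {Ost : I → Finset X}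
    (hv : ∀ i x, 0 ≤ v i x) (hopt : IsOptimal v k Ost)
    (a : X → I) (ha : ∀ x i, x ∈ Ost i ↔ a x = i) {ε : ℝ} (hε : 0 < ε)
    (hperm : ∀ π : Equiv.Perm X, ∑ z, cE v a ε z (π z) ≤ 0)
    (hX : Nonempty X) {y x : X} (h : legE v a y x) :
    qmax (cE v a ε) hX x - qmax (cE v a ε) hX y ≤ ccost v a y x := by
  obtain ⟨π, hwt, hπ⟩ := h
  set r := Function.minimalPeriod (⇑π) y with hrdef
  have hper : Function.IsPeriodicPt (⇑π) (orderOf π) y := by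
    show (⇑π)^[orderOf π] y = y
    rw [Equiv.Perm.iterate_eq_pow, pow_orderOf_eq_one]
    rfl
  have hrpos : 0 < r := hper.minimalPeriod_pos (orderOf_pos π)
  have hry : (⇑π)^[r] y = y := Function.iterate_minimalPeriod
  have hinj : ∀ s t, s < t → t < r → (⇑π)^[s] y ≠ (⇑π)^[t] y := by
    intro s t hst htr heq
    have := Function.iterate_injOn_Iio_minimalPeriod (f := ⇑π) (x := y)
      (by exact Set.mem_Iio.2 (by omega)) (Set.mem_Iio.2 htr) heq
    omega
  -- the orbit list
  set L : List X := List.map (fun j => (⇑π)^[j] y) (List.range r) with hL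
  have hmemL : ∀ z, z ∈ L ↔ ∃ t, t < r ∧ (⇑π)^[t] y = z := by
    intro z
    simp [hL, List.mem_map, List.mem_range]
    constructor <;> rintro ⟨t, ht, h⟩ <;> exact ⟨t, ht, h.symm⟩
  have hnd : L.Nodup := by
    refine List.Nodup.map_on ?_ List.nodup_range
    intro s hs t ht heq
    rw [List.mem_range] at hs ht
    by_contra hne
    rcases lt_or_gt_of_ne hne with h' | h'
    · exact hinj s t h' ht heq
    · exact hinj t s h' hs heq.symm
  have hlen : L.length = r := by simp [hL]
  have hgetL : ∀ t (ht : t < r), L[t]'(by omega) = (⇑π)^[t] y := by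
    intro t ht
    simp [hL]
  have hstep : ∀ t : ℕ, π ((⇑π)^[t] y) = (⇑π)^[t+1] y :=
    fun t => (Function.iterate_succ_apply' (⇑π) t y).symm
  have hkey : ∀ t, t < r → L.formPerm ((⇑π)^[t] y) = (⇑π)^[t+1] y := by
    intro t ht
    rw [← hgetL t ht]
    rw [List.formPerm_apply_getElem L hnd t (by omega)]
    rcases Nat.lt_or_ge (t+1) r with h' | h'
    · have hmod : (t + 1) % L.length = t + 1 := by rw [hlen]; exact Nat.mod_eq_of_lt h'
      simp only [hmod]
      exact hgetL (t+1) h'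
    · have htr1 : t + 1 = r := by omega
      have hmod : (t + 1) % L.length = 0 := by rw [hlen, htr1, Nat.mod_self]
      simp only [hmod]
      rw [hgetL 0 hrpos, htr1, hry]
      exact Function.iterate_zero_apply (⇑π) y
  have hnext : ∀ z, z ∈ L → L.formPerm z = π z := by
    intro z hz
    obtain ⟨t, htr, rfl⟩ := (hmemL z).1 hz
    rw [hkey t htr, hstep t]
  have hinvmem : ∀ z, z ∈ L → π.symm z ∈ L := by
    intro z hz
    obtain ⟨t, htr, rfl⟩ := (hmemL z).1 hz
    rcases Nat.eq_zero_or_pos t with rfl | ht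
    · refine (hmemL _).2 ⟨r - 1, by omega, ?_⟩
      have h9 : π ((⇑π)^[r-1] y) = (⇑π)^[0] y := by
        rw [hstep (r-1), (by omega : r - 1 + 1 = r), hry]
        exact (Function.iterate_zero_apply (⇑π) y).symm
      rw [← h9, Equiv.symm_apply_apply]
    · refine (hmemL _).2 ⟨t - 1, by omega, ?_⟩
      have h9 : π ((⇑π)^[t-1] y) = (⇑π)^[t] y := by
        rw [hstep (t-1), (by omega : t - 1 + 1 = t)]
      rw [← h9, Equiv.symm_apply_apply]
  -- the complementary permutation
  set τ : Equiv.Perm X := π * (L.formPerm)⁻¹ with hτ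
  have hτmem : ∀ z, z ∈ L → τ z = z := by
    intro z hz
    have h1 : (L.formPerm)⁻¹ z = π.symm z := by
      rw [Equiv.Perm.inv_eq_iff_eq]
      rw [hnext (π.symm z) (hinvmem z hz), Equiv.apply_symm_apply]
    show π ((L.formPerm)⁻¹ z) = z
    rw [h1, Equiv.apply_symm_apply]
  have hτnot : ∀ z, z ∉ L → τ z = π z := by
    intro z hz
    have h1 : (L.formPerm)⁻¹ z = z := by
      rw [Equiv.Perm.inv_eq_iff_eq]
      exact (List.formPerm_apply_of_notMem (l := L) (x := z) hz).symm
    show π ((L.formPerm)⁻¹ z) = π z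
    rw [h1]
  -- orbit finset
  set Lf : Finset X := (Finset.range r).image (fun t => (⇑π)^[t] y) with hLf
  have hLfmem : ∀ z, z ∈ Lf ↔ z ∈ L := by
    intro z
    rw [hmemL z]
    simp [hLf]
  set S := ∑ t ∈ Finset.range r, ccost v a ((⇑π)^[t] y) ((⇑π)^[t+1] y) with hS
  have h1 : ∑ z ∈ Lf, (v (a z) (π z) - v (a z) z) = S := by
    rw [hLf, Finset.sum_image ?_]
    · refine Finset.sum_congr rfl fun t ht => ?_
      rw [ccost, ← hstep t]
    · intro s hs t ht heq
      by_contra hne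
      rcases lt_or_gt_of_ne hne with h' | h'
      · exact hinj s t h' (Finset.mem_range.1 ht) heq
      · exact hinj t s h' (Finset.mem_range.1 hs) heq.symm
  have h2 : wtp v a π = (∑ z ∈ Finset.univ \ Lf, (v (a z) (π z) - v (a z) z)) + S := by
    rw [wtp, ← h1, Finset.sum_sdiff (Finset.subset_univ Lf)]
  have h3 : wtp v a τ = ∑ z ∈ Finset.univ \ Lf, (v (a z) (π z) - v (a z) z) := by
    rw [wtp, ← Finset.sum_sdiff (Finset.subset_univ Lf)]
    have hz1 : ∑ z ∈ Lf, (v (a z) (τ z) - v (a z) z) = 0 := by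
      apply Finset.sum_eq_zero
      intro z hz
      rw [hτmem z ((hLfmem z).1 hz)]
      ring
    have hz2 : ∑ z ∈ Finset.univ \ Lf, (v (a z) (τ z) - v (a z) z)
        = ∑ z ∈ Finset.univ \ Lf, (v (a z) (π z) - v (a z) z) := by
      refine Finset.sum_congr rfl fun z hz => ?_
      rw [hτnot z (fun hm => ((Finset.mem_sdiff.1 hz).2 ((hLfmem z).2 hm)))]
    rw [hz1, hz2]
    ring
  have hSnonneg : 0 ≤ S := by
    have hτle : wtp v a τ ≤ 0 := wtp_nonpos hv hopt a ha τ
    rw [hwt] at h2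
    rw [h3] at hτle
    linarith
  -- telescope
  set Q := fun j : ℕ => qmax (cE v a ε) hX ((⇑π)^[j] y) with hQ
  have htele : ∀ j, ccost v a ((⇑π)^[j] y) ((⇑π)^[j+1] y) ≤ Q (j+1) - Q j := by
    intro j
    have hleg : legE v a ((⇑π)^[j] y) ((⇑π)^[j+1] y) := ⟨π, hwt, hstep j⟩
    have hb := qmax_bellman (cE_self v a ε) hperm hX ((⇑π)^[j] y) ((⇑π)^[j+1] y)
    rw [cE_of_legE v a ε hleg] at hb
    rw [hQ]
    linarith
  have hsum0 : ∑ j ∈ Finset.range r, (Q (j+1) - Q j) = 0 := by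
    rw [Finset.sum_range_sub Q r]
    rw [hQ]
    simp only [hry, Function.iterate_zero_apply]
    ring
  obtain ⟨r', hr'⟩ : ∃ r', r = r' + 1 := ⟨r - 1, by omega⟩
  have hsplit1 : ∑ j ∈ Finset.range r, (Q (j+1) - Q j)
      = (∑ j ∈ Finset.range r', (Q (j+1+1) - Q (j+1))) + (Q 1 - Q 0) := by
    rw [hr']
    exact Finset.sum_range_succ' (fun j => Q (j+1) - Q j) r'
  have hsplit2 : S = (∑ j ∈ Finset.range r', ccost v a ((⇑π)^[j+1] y) ((⇑π)^[j+1+1] y))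
      + ccost v a ((⇑π)^[0] y) ((⇑π)^[0+1] y) := by
    rw [hS, hr']
    exact Finset.sum_range_succ' _ r'
  have hterm : (∑ j ∈ Finset.range r', ccost v a ((⇑π)^[j+1] y) ((⇑π)^[j+1+1] y))
      ≤ ∑ j ∈ Finset.range r', (Q (j+1+1) - Q (j+1)) :=
    Finset.sum_le_sum fun j _ => htele (j+1)
  have hC0 : ccost v a ((⇑π)^[0] y) ((⇑π)^[0+1] y) = ccost v a y x := by
    have h1 : (⇑π)^[0] y = y := rfl
    have h2 : (⇑π)^[0+1] y = x := by
      rw [Function.iterate_one, hπ]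
    rw [h1, h2]
  have hQ1 : Q 1 = qmax (cE v a ε) hX x := by
    rw [hQ]
    simp only [Function.iterate_one, hπ]
  have hQ0 : Q 0 = qmax (cE v a ε) hX y := by
    rw [hQ]
    simp only [Function.iterate_zero_apply]
  rw [hsplit1] at hsum0
  rw [hC0] at hsplit2
  rw [← hQ1, ← hQ0]
  linarith

end Aux

/-- Every multi-demand market with strictly positive item valuations admits rough prices
under which every legal item yields positive utility. -/
theorem exists_rough_prices_with_positive_utility
    {X I : Type*} [Fintype X] [DecidableEq X] [Fintype I] [DecidableEq I]
    (k : I → ℕ) (hk : ∀ i, 1 ≤ k i) (hsum : ∑ i, k i = Fintype.card X)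
    (v : I → X → ℝ) (hv : ∀ i x, 0 < v i x)
    (hex : ∃ O : I → Finset X, IsAllocation k O) :
    ∃ p : X → ℝ, (∀ x, 0 < p x) ∧
      (∀ i,
        (∀ x y, AlwaysItem v k i x → ¬ AlwaysItem v k i y →
          v i y - p y < v i x - p x) ∧
        (∀ x y, LegalItem v k i x → ¬ AlwaysItem v k i x →
          LegalItem v k i y → ¬ AlwaysItem v k i y →
          v i x - p x = v i y - p y) ∧
        (∀ x y, LegalItem v k i x → ¬ LegalItem v k i y →
          v i y - p y < v i x - p x)) ∧
      (∀ i x, LegalItem v k i x → 0 < v i x - p x) := by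
  classical
  rcases isEmpty_or_nonempty X with hXe | hX
  · exact ⟨fun _ => 1, fun x => (hXe.elim x), fun i =>
      ⟨fun x => (hXe.elim x), fun x => (hXe.elim x), fun x => (hXe.elim x)⟩,
      fun i x => (hXe.elim x)⟩
  have hI : Nonempty I := by
    by_contra hni
    rw [not_nonempty_iff] at hni
    have h0 : ∑ i, k i = 0 := by simp
    rw [hsum] at h0
    exact absurd h0 (Nat.pos_iff_ne_zero.1 Fintype.card_pos)
  obtain ⟨Ost, hopt⟩ := exists_optimal (v := v) hex
  set a : X → I := ownerOf Ost hopt.1.2 with hadef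
  have ha : ∀ x i, x ∈ Ost i ↔ a x = i := fun x i => mem_iff_ownerOf hopt.1.2 x i
  have hv0 : ∀ i x, 0 ≤ v i x := fun i x => (hv i x).le
  obtain ⟨ε, hεpos, hεb⟩ := exists_eps hv0 hopt a ha
  have hperm : ∀ π : Equiv.Perm X, ∑ z, cE v a ε z (π z) ≤ 0 :=
    cE_perm_sum_nonpos hv0 hopt a ha hεpos hεb
  have hdiag : ∀ z, cE v a ε z z = 0 := cE_self v a ε
  haveI : Nonempty (I × X) := ⟨(hI.some, hX.some)⟩
  set m : ℝ := Finset.univ.inf' Finset.univ_nonempty (fun p : I × X => v p.1 p.2) with hmdef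
  have hm : ∀ i z, m ≤ v i z := fun i z => Finset.inf'_le _ (Finset.mem_univ (i, z))
  have hmpos : 0 < m := by
    rw [hmdef, Finset.lt_inf'_iff]
    exact fun p _ => hv p.1 p.2
  set β : ℝ := m / 2 with hβdef
  set q : X → ℝ := fun x => β + qmax (cE v a ε) hX x with hq
  have hqlow : ∀ x, β ≤ q x := by
    intro x
    have := qmax_nonneg (cE v a ε) hX x
    rw [hq]
    simp only []
    linarith
  have hqup : ∀ x, q x < v (a x) x := by
    intro x
    have hB : (0:ℝ) ≤ v (a x) x - m := by linarith [hm (a x) x]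
    have hcb : ∀ z, - cE v a ε x z ≤ v (a x) x - m := by
      intro z
      have h1 : (0:ℝ) ≤ (if legE v a x z then (0:ℝ) else ε) := by split <;> linarith
      have h2 := hm (a x) z
      rw [cE, ccost]
      linarith
    have := qmax_le hdiag hperm hX x hB hcb
    rw [hq]
    simp only []
    linarith
  have hOstne : ∀ i, ∃ y, y ∈ Ost i := by
    intro i
    have : 0 < (Ost i).card := by rw [hopt.1.1 i]; exact hk i
    exact Finset.card_pos.1 this
  choose yi hyi using hOstne
  have hayi : ∀ i, a (yi i) = i := fun i => (ha _ _).1 (hyi i)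
  set u : I → ℝ := fun i => v i (yi i) - q (yi i) with hu
  have hqB : ∀ y x, q y + cE v a ε y x ≤ q x := by
    intro y x
    have := qmax_bellman hdiag hperm hX y x
    rw [hq]
    simp only []
    linarith
  have hL1 : ∀ i x, ¬ legE v a (yi i) x → v i x - q x ≤ u i - ε := by
    intro i x hnl
    have h1 := hqB (yi i) x
    rw [cE, ccost, hayi i, if_neg hnl] at h1
    rw [hu]
    simp only []
    linarith
  have hL2 : ∀ i x, v i x - q x ≤ u i := by
    intro i x
    have h1 := hqB (yi i) x
    have h2 : (0:ℝ) ≤ (if legE v a (yi i) x then (0:ℝ) else ε) := by split <;> linarith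
    rw [cE, ccost, hayi i] at h1
    rw [hu]
    simp only []
    linarith
  have hL3 : ∀ i x, ¬ LegalItem v k i x → v i x - q x ≤ u i - ε := by
    intro i x hnl
    apply hL1
    intro hleg
    exact hnl ((legal_iff hv0 hopt a ha i x).2 ⟨yi i, hyi i, hleg⟩)
  have swap2 : ∀ i z w, z ∈ Ost i → w ∈ Ost i → q w - q z ≤ v i w - v i z := by
    intro i z w hz hw
    rcases eq_or_ne z w with rfl | hzw
    · simp
    · have hz' : a z = i := (ha _ _).1 hz
      have hw' : a w = i := (ha _ _).1 hw
      have hleg2 : legE v a z w := by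
        refine ⟨Equiv.swap z w, ?_, Equiv.swap_apply_left z w⟩
        rw [wtp]
        have hzero : ∀ t ∈ Finset.univ, t ∉ ({z, w} : Finset X) →
            v (a t) ((Equiv.swap z w) t) - v (a t) t = 0 := by
          intro t _ ht
          simp only [Finset.mem_insert, Finset.mem_singleton] at ht
          push_neg at ht
          rw [Equiv.swap_apply_of_ne_of_ne ht.1 ht.2]
          ring
        rw [← Finset.sum_subset (Finset.subset_univ ({z, w} : Finset X)) hzero]
        rw [Finset.sum_pair hzw]
        rw [Equiv.swap_apply_left, Equiv.swap_apply_right, hz', hw']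
        ring
      have := qmax_rev hv0 hopt a ha hεpos hperm hX hleg2
      rw [ccost, hz'] at this
      rw [hq]
      simp only []
      linarith
  have hL4 : ∀ i x, LegalItem v k i x → v i x - q x = u i := by
    intro i x hl
    obtain ⟨y, hy, hleg⟩ := (legal_iff hv0 hopt a ha i x).1 hl
    have hay : a y = i := (ha _ _).1 hy
    have r1 : q x - q y ≤ v i x - v i y := by
      have := qmax_rev hv0 hopt a ha hεpos hperm hX hleg
      rw [ccost, hay] at this
      rw [hq]
      simp only []
      linarith
    have r3 : q y - q (yi i) ≤ v i y - v i (yi i) := swap2 i (yi i) y (hyi i) hy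
    refine le_antisymm (hL2 i x) ?_
    rw [hu]
    simp only []
    linarith
  have hupos : ∀ i, 0 < u i := by
    intro i
    have h1 := hqup (yi i)
    rw [hayi i] at h1
    rw [hu]
    simp only []
    linarith
  have hAl : ∀ i x, AlwaysItem v k i x → x ∈ Ost i := fun i x hA => hA Ost hopt
  have hAleg : ∀ i x, AlwaysItem v k i x → LegalItem v k i x :=
    fun i x hA => ⟨Ost, hopt, hAl i x hA⟩
  have hAa : ∀ i x, AlwaysItem v k i x → a x = i := fun i x hA => (ha _ _).1 (hAl i x hA)
  have huniq : ∀ i j x, LegalItem v k i x → AlwaysItem v k j x → i = j := by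
    rintro i j x ⟨O, hO, hx⟩ hA
    have hxj : x ∈ O j := hA O hO
    obtain ⟨l, _, hu'⟩ := hO.1.2 x
    exact (hu' i hx).trans (hu' j hxj).symm
  set δ : ℝ := min ε β / 2 with hδdef
  have hδpos : 0 < δ := by
    rw [hδdef]
    have : 0 < min ε β := lt_min hεpos (by rw [hβdef]; linarith)
    linarith
  have hδε : δ < ε := by
    rw [hδdef]
    have h1 : min ε β ≤ ε := min_le_left _ _
    linarith
  have hδβ : δ < β := by
    rw [hδdef]
    have h1 : min ε β ≤ β := min_le_right _ _
    have : 0 < min ε β := lt_min hεpos (by rw [hβdef]; linarith)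
    linarith
  set p : X → ℝ := fun x => q x - (if AlwaysItem v k (a x) x then δ else 0) with hp
  have hput : ∀ i z, v i z - p z = (v i z - q z) + (if AlwaysItem v k (a z) z then δ else 0) := by
    intro i z
    rw [hp]
    ring
  have hnotR : ∀ i z, LegalItem v k i z → ¬ AlwaysItem v k i z → ¬ AlwaysItem v k (a z) z := by
    intro i z hlz hnaz hA
    have : i = a z := huniq i (a z) z hlz hA
    rw [← this] at hA
    exact hnaz hA
  refine ⟨p, ?_, ?_, ?_⟩
  · intro x
    rw [hp]
    have h1 := hqlow x
    have h2 : (if AlwaysItem v k (a x) x then δ else 0) ≤ δ := by split <;> linarith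
    simp only []
    linarith
  · intro i
    refine ⟨?_, ?_, ?_⟩
    · intro x y hAx hAy
      have hax : a x = i := hAa i x hAx
      have hux : v i x - p x = u i + δ := by
        rw [hput, hL4 i x (hAleg i x hAx), hax, if_pos hAx]
      by_cases hAy2 : AlwaysItem v k (a y) y
      · have hnly : ¬ LegalItem v k i y := by
          intro hly
          have := huniq i (a y) y hly hAy2
          rw [← this] at hAy2
          exact hAy hAy2
        have := hL3 i y hnly
        rw [hput, if_pos hAy2, hux]
        linarith
      · have := hL2 i y
        rw [hput, if_neg hAy2, hux]
        linarith
    · intro x y hlx hnAx hly hnAy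
      rw [hput, hput, if_neg (hnotR i x hlx hnAx), if_neg (hnotR i y hly hnAy),
        hL4 i x hlx, hL4 i y hly]
    · intro x y hlx hnly
      have h1 : u i ≤ v i x - p x := by
        rw [hput, hL4 i x hlx]
        have : (0:ℝ) ≤ (if AlwaysItem v k (a x) x then δ else 0) := by split <;> linarith
        linarith
      have h2 := hL3 i y hnly
      have h3 : (if AlwaysItem v k (a y) y then δ else 0) ≤ δ := by split <;> linarith
      rw [hput]
      linarith
  · intro i x hlx
    have h1 : u i ≤ v i x - p x := by
      rw [hput, hL4 i x hlx]
      have : (0:ℝ) ≤ (if AlwaysItem v k (a x) x then δ else 0) := by split <;> linarith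
      linarith
    linarith [hupos i]
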